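/- Let K ≥ 1 be an integer, σ > 0, and t ∈ ℝ. Define ε_K(x) := σ^{-1} (2π)^{-K/2} · ∏_{1 ≤ k < l ≤ K} exp(-(1/(2K))(1 - σ^{-2})(x_k - x_l)^2) · ∏_{n=1}^K (x_n^2 + t) exp(-x_n^2/(2σ^2)) for x ∈ ℝ^K. Then Ê_{2K}(t;σ) = σ · ∫_{ℝ^K} ∫_{ℝ^K} exp( -(1/4)(1 - σ^{-2}) · ( K^{-1/2} ∑_{k=1}^K (x_k - x̃_k) )^2 ) · ε_K(x) · ε_K(x̃) dx dx̃. -/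

import Mathlib

open MeasureTheory Real Finset Filter

/-- The `N`-variate normal density
`p_{N,σ}(x) = σ⁻¹ (2π)^{-N/2} ∏_{k<l} exp(-(1/(2N))(1-σ⁻²)(x_k-x_l)²) ∏_n exp(-x_n²/(2σ²))`. -/
noncomputable def pdensity (N : ℕ) (σ : ℝ) (x : Fin N → ℝ) : ℝ :=
  σ⁻¹ * (2 * π) ^ (-(N : ℝ) / 2) *
    (∏ k : Fin N, ∏ l ∈ Finset.univ.filter (fun l => k < l),
      Real.exp (-(1 / (2 * (N : ℝ))) * (1 - (σ ^ 2)⁻¹) * (x k - x l) ^ 2)) *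
    ∏ n : Fin N, Real.exp (-(x n) ^ 2 / (2 * σ ^ 2))

/-- `Ê_N(t;σ) = ∫ ∏ (xₙ² + t) p_{N,σ}(x) dx`, where the real parameter `t` plays the role
of `z²`. -/
noncomputable def EhatN (N : ℕ) (σ : ℝ) (t : ℝ) : ℝ :=
  ∫ x : Fin N → ℝ, (∏ n : Fin N, ((x n) ^ 2 + t)) * pdensity N σ x

/-- The (unnormalized) signed integrand
`ε_K(x) = σ⁻¹ (2π)^{-K/2} ∏_{k<l} exp(-(1/(2K))(1-σ⁻²)(x_k-x_l)²)
  ∏ₙ (xₙ² + t) exp(-xₙ²/(2σ²))`. -/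
noncomputable def epsK (K : ℕ) (σ t : ℝ) (x : Fin K → ℝ) : ℝ :=
  σ⁻¹ * (2 * π) ^ (-(K : ℝ) / 2) *
    (∏ k : Fin K, ∏ l ∈ Finset.univ.filter (fun l => k < l),
      Real.exp (-(1 / (2 * (K : ℝ))) * (1 - (σ ^ 2)⁻¹) * (x k - x l) ^ 2)) *
    ∏ n : Fin K, ((x n) ^ 2 + t) * Real.exp (-(x n) ^ 2 / (2 * σ ^ 2))


section PairSum
variable {m : ℕ}

lemma sum_pairs_sq {m : ℕ} (f : Fin m → ℝ) :
    ∑ k : Fin m, ∑ l ∈ Finset.univ.filter (fun l => k < l), (f k - f l) ^ 2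
      = (m : ℝ) * ∑ i, f i ^ 2 - (∑ i, f i) ^ 2 := by
  have hsymm : ∑ k : Fin m, ∑ l ∈ Finset.univ.filter (fun l => l < k), (f k - f l) ^ 2
      = ∑ k : Fin m, ∑ l ∈ Finset.univ.filter (fun l => k < l), (f k - f l) ^ 2 := by
    rw [Finset.sum_comm' (t' := Finset.univ) (s' := fun l => Finset.univ.filter (fun k => l < k))
      (by intro x y; simp)]
    apply Finset.sum_congr rfl
    intro k _
    apply Finset.sum_congr rfl
    intro l _
    ring
  have hfull : ∑ k : Fin m, ∑ l : Fin m, (f k - f l) ^ 2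
      = 2 * ((m : ℝ) * ∑ i, f i ^ 2 - (∑ i, f i) ^ 2) := by
    have : ∀ k, ∑ l : Fin m, (f k - f l) ^ 2
        = (m : ℝ) * f k ^ 2 + (∑ i, f i ^ 2) - 2 * f k * ∑ i, f i := by
      intro k
      simp only [sub_sq, Finset.sum_add_distrib, Finset.sum_sub_distrib, Finset.sum_const,
        Finset.card_univ, Fintype.card_fin, nsmul_eq_mul, ← Finset.mul_sum]
      ring
    simp only [this, Finset.sum_add_distrib, Finset.sum_sub_distrib, Finset.sum_const,
      Finset.card_univ, Fintype.card_fin, nsmul_eq_mul, mul_assoc, ← Finset.mul_sum,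
      ← Finset.sum_mul]
    ring
  have hsplit : ∑ k : Fin m, ∑ l : Fin m, (f k - f l) ^ 2
      = ∑ k : Fin m, ∑ l ∈ Finset.univ.filter (fun l => k < l), (f k - f l) ^ 2
        + ∑ k : Fin m, ∑ l ∈ Finset.univ.filter (fun l => l < k), (f k - f l) ^ 2 := by
    rw [← Finset.sum_add_distrib]
    apply Finset.sum_congr rfl
    intro k _
    rw [← Finset.sum_filter_add_sum_filter_not Finset.univ (fun l => k < l)]
    congr 1
    have : Finset.univ.filter (fun l : Fin m => ¬ k < l)
        = insert k (Finset.univ.filter (fun l => l < k)) := by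
      ext l
      simp [not_lt, le_iff_lt_or_eq, or_comm, eq_comm]
    rw [this, Finset.sum_insert (by simp)]
    simp
  have := hsplit
  rw [hsymm, hfull] at this
  linarith

lemma pairprod (c : ℝ) (f : Fin m → ℝ) :
    (∏ k : Fin m, ∏ l ∈ Finset.univ.filter (fun l => k < l),
        Real.exp (c * (f k - f l) ^ 2))
      = Real.exp (c * ((m : ℝ) * ∑ i, f i ^ 2 - (∑ i, f i) ^ 2)) := by
  simp only [← Real.exp_sum, ← Finset.mul_sum, sum_pairs_sq]


lemma gaussprod (c : ℝ) (f : Fin m → ℝ) :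
    (∏ n : Fin m, Real.exp (-(f n) ^ 2 / c)) = Real.exp (-(∑ i, f i ^ 2) / c) := by
  rw [← Real.exp_sum]
  congr 1
  rw [show (∑ n : Fin m, -(f n) ^ 2 / c) = ∑ n : Fin m, -((f n) ^ 2) / c from rfl]
  rw [← Finset.sum_div, Finset.sum_neg_distrib, neg_div]

end PairSum

/-- index equivalence -/
def myE (K : ℕ) : Fin K ⊕ Fin K ≃ Fin (2 * K) :=
  finSumFinEquiv.trans (finCongr (two_mul K).symm)

/-- the splitting measurable equivalence -/
noncomputable def splitEquiv (K : ℕ) :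
    ((Fin K → ℝ) × (Fin K → ℝ)) ≃ᵐ (Fin (2 * K) → ℝ) :=
  (MeasurableEquiv.sumPiEquivProdPi (fun _ : Fin K ⊕ Fin K => ℝ)).symm.trans
    (MeasurableEquiv.piCongrLeft (fun _ => ℝ) (myE K))

lemma splitEquiv_inl (K : ℕ) (x y : Fin K → ℝ) (i : Fin K) :
    splitEquiv K (x, y) (myE K (Sum.inl i)) = x i := by
  simpa [splitEquiv, MeasurableEquiv.trans_apply, MeasurableEquiv.coe_piCongrLeft,
    MeasurableEquiv.coe_sumPiEquivProdPi_symm] using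
      Equiv.piCongrLeft_sum_inl (fun _ : Fin (2 * K) => ℝ) (myE K) x y i

lemma splitEquiv_inr (K : ℕ) (x y : Fin K → ℝ) (i : Fin K) :
    splitEquiv K (x, y) (myE K (Sum.inr i)) = y i := by
  simpa [splitEquiv, MeasurableEquiv.trans_apply, MeasurableEquiv.coe_piCongrLeft,
    MeasurableEquiv.coe_sumPiEquivProdPi_symm] using
      Equiv.piCongrLeft_sum_inr (fun _ : Fin (2 * K) => ℝ) (myE K) x y i

lemma splitEquiv_measurePreserving (K : ℕ) :
    MeasurePreserving (splitEquiv K) volume volume := by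
  have h1 := volume_measurePreserving_sumPiEquivProdPi_symm (fun _ : Fin K ⊕ Fin K => ℝ)
  have h2 := volume_measurePreserving_piCongrLeft (fun _ : Fin (2 * K) => ℝ) (myE K)
  simpa [splitEquiv, MeasurableEquiv.coe_trans] using h2.comp h1

lemma splitEquiv_sum (K : ℕ) (x y : Fin K → ℝ) (g : ℝ → ℝ) :
    ∑ n : Fin (2 * K), g (splitEquiv K (x, y) n)
      = ∑ k, g (x k) + ∑ k, g (y k) := by
  rw [← Equiv.sum_comp (myE K) (fun n => g (splitEquiv K (x, y) n)), Fintype.sum_sum_type]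
  simp [splitEquiv_inl, splitEquiv_inr]

lemma splitEquiv_prod (K : ℕ) (x y : Fin K → ℝ) (g : ℝ → ℝ) :
    ∏ n : Fin (2 * K), g (splitEquiv K (x, y) n)
      = (∏ k, g (x k)) * ∏ k, g (y k) := by
  rw [← Equiv.prod_comp (myE K) (fun n => g (splitEquiv K (x, y) n)), Fintype.prod_sum_type]
  simp [splitEquiv_inl, splitEquiv_inr]

lemma pointwise (K : ℕ) (hK : 1 ≤ K) (σ : ℝ) (hσ : 0 < σ) (t : ℝ)
    (x y : Fin K → ℝ) (z : Fin (2 * K) → ℝ)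
    (hsum : ∀ g : ℝ → ℝ, ∑ n : Fin (2 * K), g (z n) = ∑ k, g (x k) + ∑ k, g (y k))
    (hprod : ∀ g : ℝ → ℝ, ∏ n : Fin (2 * K), g (z n) = (∏ k, g (x k)) * ∏ k, g (y k)) :
    (∏ n : Fin (2 * K), ((z n) ^ 2 + t)) * pdensity (2 * K) σ z
      = σ * (Real.exp (-(1 / 4) * (1 - (σ ^ 2)⁻¹) *
            ((Real.sqrt (K : ℝ))⁻¹ * ∑ k, (x k - y k)) ^ 2)
          * epsK K σ t x * epsK K σ t y) := by
  have hKpos : (0 : ℝ) < K := by exact_mod_cast hK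
  have hQ : ∑ n : Fin (2 * K), (z n) ^ 2 = ∑ k, (x k) ^ 2 + ∑ k, (y k) ^ 2 := by
    simpa using hsum (fun u => u ^ 2)
  have hS : ∑ n : Fin (2 * K), z n = ∑ k, x k + ∑ k, y k := by simpa using hsum id
  have hP : ∏ n : Fin (2 * K), ((z n) ^ 2 + t)
      = (∏ k, ((x k) ^ 2 + t)) * ∏ k, ((y k) ^ 2 + t) := by
    simpa using hprod (fun u => u ^ 2 + t)
  have hcross : ((Real.sqrt (K : ℝ))⁻¹ * ∑ k, (x k - y k)) ^ 2
      = ((∑ k, x k) - ∑ k, y k) ^ 2 / K := by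
    rw [mul_pow, inv_pow, Real.sq_sqrt hKpos.le, Finset.sum_sub_distrib]
    ring
  rw [pdensity, epsK, epsK, pairprod, pairprod, pairprod, gaussprod,
    Finset.prod_mul_distrib, Finset.prod_mul_distrib, gaussprod, gaussprod, hQ, hS, hP, hcross]
  set Q1 := ∑ k, (x k) ^ 2
  set Q2 := ∑ k, (y k) ^ 2
  set S1 := ∑ k, x k
  set S2 := ∑ k, y k
  set P1 := ∏ k, ((x k) ^ 2 + t)
  set P2 := ∏ k, ((y k) ^ 2 + t)
  have h2pi : (0:ℝ) < 2 * π := by positivity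
  have hσ1 : σ * σ⁻¹ = 1 := mul_inv_cancel₀ hσ.ne'
  set CK := (2 * π : ℝ) ^ (-(K : ℝ) / 2) with hCK
  rw [show ((2 * π : ℝ)) ^ (-(((2 * K : ℕ)) : ℝ) / 2) = CK * CK from by
    rw [hCK, ← Real.rpow_add h2pi]; congr 1; push_cast; ring]
  set eA := rexp (-(1 / (2 * ((2 * K : ℕ) : ℝ))) * (1 - (σ ^ 2)⁻¹) *
      (((2 * K : ℕ) : ℝ) * (Q1 + Q2) - (S1 + S2) ^ 2)) with heA
  set eB := rexp (-(Q1 + Q2) / (2 * σ ^ 2)) with heB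
  set eC := rexp (-(1 / 4) * (1 - (σ ^ 2)⁻¹) * ((S1 - S2) ^ 2 / (K : ℝ))) with heC
  set eD := rexp (-(1 / (2 * (K : ℝ))) * (1 - (σ ^ 2)⁻¹) * ((K : ℝ) * Q1 - S1 ^ 2)) with heD
  set eE := rexp (-Q1 / (2 * σ ^ 2)) with heE
  set eF := rexp (-(1 / (2 * (K : ℝ))) * (1 - (σ ^ 2)⁻¹) * ((K : ℝ) * Q2 - S2 ^ 2)) with heF
  set eG := rexp (-Q2 / (2 * σ ^ 2)) with heG
  have hE : eA * eB = eC * (eD * eE) * (eF * eG) := by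
    rw [heA, heB, heC, heD, heE, heF, heG, ← Real.exp_add, ← Real.exp_add, ← Real.exp_add,
      ← Real.exp_add, ← Real.exp_add]
    congr 1
    rw [show ((2 * K : ℕ) : ℝ) = 2 * (K : ℝ) from by push_cast; ring]
    field_simp
    ring
  linear_combination (P1 * P2 * σ⁻¹ * CK * CK) * hE -
    (σ⁻¹ * P1 * P2 * CK * CK * (eC * eD * eE * eF * eG)) * hσ1


lemma integrable_F {N : ℕ} (hN : 0 < N) {σ : ℝ} (hσ : 0 < σ) (t : ℝ) :
    Integrable (fun z : Fin N → ℝ => (∏ n, ((z n) ^ 2 + t)) * pdensity N σ z) := by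
  set a : ℝ := min (1/2) (1/(2*σ^2)) with ha_def
  have ha : 0 < a := lt_min (by norm_num) (by positivity)
  have h1d : Integrable (fun u : ℝ => (u ^ 2 + |t|) * Real.exp (-a * u ^ 2)) := by
    have h2 : Integrable (fun u : ℝ => u ^ 2 * Real.exp (-a * u ^ 2)) := by
      have := integrable_rpow_mul_exp_neg_mul_sq ha (s := 2) (by norm_num)
      have h22 : ∀ u : ℝ, u ^ (2:ℝ) = u ^ (2:ℕ) := fun u => by
        rw [show (2:ℝ) = ((2:ℕ):ℝ) by norm_num, Real.rpow_natCast]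
      simpa [h22] using this
    have h0 := (integrable_exp_neg_mul_sq ha).const_mul |t|
    simpa [add_mul, Pi.add_def] using h2.add h0
  have hg : Integrable (fun z : Fin N → ℝ =>
      ∏ n, (((z n) ^ 2 + |t|) * Real.exp (-a * (z n) ^ 2))) :=
    Integrable.fin_nat_prod (fun i => h1d)
  have hNr : (0:ℝ) < N := by exact_mod_cast hN
  refine ((hg.const_mul (σ⁻¹ * (2 * π) ^ (-(N:ℝ)/2))).mono' ?_ ?_)
  · apply Continuous.aestronglyMeasurable
    unfold pdensity
    fun_prop
  · filter_upwards with z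
    rw [Real.norm_eq_abs, abs_mul]
    have hpoly : |∏ n : Fin N, ((z n) ^ 2 + t)| ≤ ∏ n : Fin N, ((z n) ^ 2 + |t|) := by
      rw [Finset.abs_prod]
      refine Finset.prod_le_prod (fun i _ => abs_nonneg _) (fun i _ => ?_)
      calc |(z i) ^ 2 + t| ≤ |(z i) ^ 2| + |t| := abs_add_le _ _
        _ = (z i) ^ 2 + |t| := by rw [abs_of_nonneg (sq_nonneg _)]
    have hpd : |pdensity N σ z|
        ≤ (σ⁻¹ * (2 * π) ^ (-(N:ℝ)/2)) * ∏ n : Fin N, Real.exp (-a * (z n) ^ 2) := by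
      rw [pdensity, pairprod, gaussprod, abs_of_nonneg (by positivity)]
      set Szz := ∑ i : Fin N, (z i) ^ 2 with hSzz
      set Sz := ∑ i : Fin N, z i with hSz
      have hsq : 0 ≤ Szz := by rw [hSzz]; positivity
      have hCS : Sz ^ 2 ≤ (N:ℝ) * Szz := by
        rw [hSz, hSzz]
        simpa [Finset.card_univ] using
          sq_sum_le_card_mul_sum_sq (s := Finset.univ) (f := z)
      have key : -(1 / (2 * (N:ℝ))) * (1 - (σ ^ 2)⁻¹) * ((N:ℝ) * Szz - Sz ^ 2)
          + (-Szz / (2 * σ ^ 2)) ≤ -a * Szz := by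
        rcases le_or_gt 0 (1 - (σ ^ 2)⁻¹) with h | h
        · have h1 : -(1 / (2 * (N:ℝ))) * (1 - (σ ^ 2)⁻¹) * ((N:ℝ) * Szz - Sz ^ 2) ≤ 0 := by
            have hA : 0 ≤ (N:ℝ) * Szz - Sz ^ 2 := by linarith
            have hB : -(1 / (2 * (N:ℝ))) * (1 - (σ ^ 2)⁻¹) ≤ 0 := by
              have : 0 ≤ (1 / (2 * (N:ℝ))) * (1 - (σ ^ 2)⁻¹) :=
                mul_nonneg (by positivity) h
              linarith
            exact mul_nonpos_of_nonpos_of_nonneg hB hA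
          have h2 : a ≤ 1 / (2 * σ ^ 2) := min_le_right _ _
          have h3 : -Szz / (2 * σ ^ 2) = -((1 / (2 * σ ^ 2)) * Szz) := by ring
          have h4 := mul_le_mul_of_nonneg_right h2 hsq
          linarith
        · have e1 : -(1 / (2 * (N:ℝ))) * (1 - (σ ^ 2)⁻¹) * ((N:ℝ) * Szz - Sz ^ 2)
              = ((σ ^ 2)⁻¹ - 1) / 2 * Szz - (1 / (2 * (N:ℝ))) * ((σ ^ 2)⁻¹ - 1) * Sz ^ 2 := by
            field_simp
            ring
          have hc : 0 ≤ (σ ^ 2)⁻¹ - 1 := by linarith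
          have e2 : 0 ≤ (1 / (2 * (N:ℝ))) * ((σ ^ 2)⁻¹ - 1) * Sz ^ 2 :=
            mul_nonneg (mul_nonneg (by positivity) hc) (sq_nonneg _)
          have e4 : ((σ ^ 2)⁻¹ - 1) / 2 * Szz + -Szz / (2 * σ ^ 2) = -(1/2) * Szz := by
            field_simp
            ring
          have h2 : a ≤ 1/2 := min_le_left _ _
          have h4 := mul_le_mul_of_nonneg_right h2 hsq
          linarith
      calc σ⁻¹ * (2 * π) ^ (-(N:ℝ)/2)
            * Real.exp (-(1 / (2 * (N:ℝ))) * (1 - (σ ^ 2)⁻¹) * ((N:ℝ) * Szz - Sz ^ 2))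
            * Real.exp (-Szz / (2 * σ ^ 2))
          = (σ⁻¹ * (2 * π) ^ (-(N:ℝ)/2)) * Real.exp (-(1 / (2 * (N:ℝ))) * (1 - (σ ^ 2)⁻¹)
              * ((N:ℝ) * Szz - Sz ^ 2) + (-Szz / (2 * σ ^ 2))) := by
            rw [Real.exp_add]; ring
        _ ≤ (σ⁻¹ * (2 * π) ^ (-(N:ℝ)/2)) * Real.exp (-a * Szz) := by
            have hcnn : (0:ℝ) ≤ σ⁻¹ * (2 * π) ^ (-(N:ℝ)/2) := by positivity
            exact mul_le_mul_of_nonneg_left (Real.exp_le_exp.2 key) hcnn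
        _ = (σ⁻¹ * (2 * π) ^ (-(N:ℝ)/2)) * ∏ n : Fin N, Real.exp (-a * (z n) ^ 2) := by
            rw [hSzz, Finset.mul_sum, Real.exp_sum]
    calc |∏ n : Fin N, ((z n) ^ 2 + t)| * |pdensity N σ z|
        ≤ (∏ n : Fin N, ((z n) ^ 2 + |t|))
          * ((σ⁻¹ * (2 * π) ^ (-(N:ℝ)/2)) * ∏ n : Fin N, Real.exp (-a * (z n) ^ 2)) :=
          mul_le_mul hpoly hpd (abs_nonneg _)
            (Finset.prod_nonneg fun i _ => by positivity)
      _ = σ⁻¹ * (2 * π) ^ (-(N:ℝ)/2)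
          * ∏ n : Fin N, (((z n) ^ 2 + |t|) * Real.exp (-a * (z n) ^ 2)) := by
          rw [Finset.prod_mul_distrib]; ring

/-- Splitting identity: `Ê_{2K}(t;σ)` is a positive-definite double integral of `ε_K`:
`Ê_{2K}(t;σ) = σ ∬ exp(-(1/4)(1-σ⁻²)(K^{-1/2} ∑ₖ (xₖ - x̃ₖ))²) ε_K(x) ε_K(x̃) dx dx̃`. -/
theorem EhatN_even_split (K : ℕ) (hK : 1 ≤ K) (σ : ℝ) (hσ : 0 < σ) (t : ℝ) :
    EhatN (2 * K) σ t =
      σ * ∫ x : Fin K → ℝ, ∫ y : Fin K → ℝ,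
        Real.exp (-(1 / 4) * (1 - (σ ^ 2)⁻¹) *
            ((Real.sqrt (K : ℝ))⁻¹ * ∑ k, (x k - y k)) ^ 2) *
          epsK K σ t x * epsK K σ t y := by
  have hNpos : 0 < 2 * K := by omega
  set F : (Fin (2 * K) → ℝ) → ℝ :=
    fun z => (∏ n : Fin (2 * K), ((z n) ^ 2 + t)) * pdensity (2 * K) σ z with hF
  have mp := splitEquiv_measurePreserving K
  have hint : Integrable F := integrable_F hNpos hσ t
  have hcomp : Integrable (fun p : (Fin K → ℝ) × (Fin K → ℝ) => F (splitEquiv K p))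
      (volume.prod volume) := by
    rw [← Measure.volume_eq_prod _ _]
    exact (mp.integrable_comp_emb (splitEquiv K).measurableEmbedding).2 hint
  have step1 : EhatN (2 * K) σ t
      = ∫ p : (Fin K → ℝ) × (Fin K → ℝ), F (splitEquiv K p) := by
    rw [EhatN, ← mp.integral_comp' F]
  rw [step1]
  rw [show (volume : Measure ((Fin K → ℝ) × (Fin K → ℝ))) = volume.prod volume from
    Measure.volume_eq_prod _ _]
  rw [integral_prod _ hcomp]
  have hpt : ∀ (x y : Fin K → ℝ), F (splitEquiv K (x, y))
      = σ * (Real.exp (-(1 / 4) * (1 - (σ ^ 2)⁻¹) *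
            ((Real.sqrt (K : ℝ))⁻¹ * ∑ k, (x k - y k)) ^ 2)
          * epsK K σ t x * epsK K σ t y) := by
    intro x y
    exact pointwise K hK σ hσ t x y _ (splitEquiv_sum K x y) (splitEquiv_prod K x y)
  simp_rw [hpt, MeasureTheory.integral_const_mul]
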